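/- arXiv:1802.09511 — 2 statements merged into one kernel-verified Lean document; each statement's English description precedes it below -/
import Mathlib

section
/- Let B ∈ ℂ^{p×p} be a nonzero matrix with spectral radius ρ(B) < 1 and k = ‖B‖_0 nonzero entries. Then ϑ2(B) ≤ ϑ1(B) ≤ √(2k) · ϑ2(B). -/
open scoped BigOperators

noncomputable section

/-- The ℓ2→ℓ2 operator (spectral) norm of a matrix. -/
noncomputable def sNorm {𝕜 : Type*} [RCLike 𝕜] {m n : Type*} [Fintype m] [Fintype n]
    [DecidableEq n] (A : Matrix m n 𝕜) : ℝ :=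
  ‖LinearMap.toContinuousLinearMap (Matrix.toEuclideanLin A)‖

/-- The ℓ1→ℓ2 operator norm of a matrix: maximum Euclidean norm of a column. -/
noncomputable def colNorm {𝕜 : Type*} [RCLike 𝕜] {m n : Type*} [Fintype m] [Fintype n]
    (A : Matrix m n 𝕜) : ℝ :=
  ⨆ j : n, Real.sqrt (∑ i : m, ‖A i j‖ ^ 2)

/-- ϑ0(B) = max over the unit circle of the spectral norm of I - zB -/
noncomputable def theta0 {p : ℕ} (B : Matrix (Fin p) (Fin p) ℂ) : ℝ :=
  ⨆ z : {z : ℂ // ‖z‖ = 1}, sNorm ((1 : Matrix (Fin p) (Fin p) ℂ) - z.1 • B)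

/-- ϑ1(B) = max over the unit circle of the spectral norm of (I - zB)⁻¹ -/
noncomputable def theta1 {p : ℕ} (B : Matrix (Fin p) (Fin p) ℂ) : ℝ :=
  ⨆ z : {z : ℂ // ‖z‖ = 1}, sNorm (((1 : Matrix (Fin p) (Fin p) ℂ) - z.1 • B)⁻¹)

/-- ϑ2(B) = max over the unit circle of the 1→2 operator norm of (I - zB)⁻¹ -/
noncomputable def theta2 {p : ℕ} (B : Matrix (Fin p) (Fin p) ℂ) : ℝ :=
  ⨆ z : {z : ℂ // ‖z‖ = 1}, colNorm (((1 : Matrix (Fin p) (Fin p) ℂ) - z.1 • B)⁻¹)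

/-- spectral radius of a complex matrix, as a real number -/
noncomputable def rho {p : ℕ} (B : Matrix (Fin p) (Fin p) ℂ) : ℝ :=
  (spectralRadius ℂ B).toReal

/-- number of nonzero entries of a matrix -/
noncomputable def nnz {m n : Type*} {α : Type*} [Zero α] (A : Matrix m n α) : ℕ :=
  {ij : m × n | A ij.1 ij.2 ≠ 0}.ncard

/-- number of nonzero entries of a vector -/
noncomputable def vnnz {m : Type*} {α : Type*} [Zero α] (v : m → α) : ℕ :=
  {i : m | v i ≠ 0}.ncard

/-- maximum absolute column sum (operator norm induced by the ℓ1 vector norm) -/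
noncomputable def colSumNorm {𝕜 : Type*} [RCLike 𝕜] {m n : Type*} [Fintype m] [Fintype n]
    (A : Matrix m n 𝕜) : ℝ :=
  ⨆ j : n, ∑ i : m, ‖A i j‖

/-- maximum absolute row sum (operator norm induced by the ℓ∞ vector norm) -/
noncomputable def rowSumNorm {𝕜 : Type*} [RCLike 𝕜] {m n : Type*} [Fintype m] [Fintype n]
    (A : Matrix m n 𝕜) : ℝ :=
  ⨆ i : m, ∑ j : n, ‖A i j‖

namespace Stmt10Aux

open Matrix Metric
open scoped Matrix.Norms.L2Operator ENNReal

variable {p : ℕ}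

/-- the euclidean-space linear map extracting column `j`. -/
noncomputable def colL (j : Fin p) : Matrix (Fin p) (Fin p) ℂ →ₗ[ℂ] EuclideanSpace ℂ (Fin p) where
  toFun A := (WithLp.equiv 2 (Fin p → ℂ)).symm (fun i => A i j)
  map_add' A₁ A₂ := by rfl
  map_smul' c A := by rw [RingHom.id_apply]; rfl

lemma colL_apply (A : Matrix (Fin p) (Fin p) ℂ) (j : Fin p) :
    colL j A = (WithLp.equiv 2 (Fin p → ℂ)).symm (fun i => A i j) := rfl

lemma norm_colL (A : Matrix (Fin p) (Fin p) ℂ) (j : Fin p) :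
    ‖colL j A‖ = Real.sqrt (∑ i, ‖A i j‖ ^ 2) := by
  rw [colL_apply, EuclideanSpace.norm_eq]
  simp

lemma colL_le_colNorm (A : Matrix (Fin p) (Fin p) ℂ) (j : Fin p) :
    ‖colL j A‖ ≤ colNorm A := by
  rw [norm_colL, colNorm]
  exact le_ciSup (f := fun j : Fin p => Real.sqrt (∑ i, ‖A i j‖ ^ 2))
    (Set.Finite.bddAbove (Set.finite_range _)) j

lemma colL_le_norm (A : Matrix (Fin p) (Fin p) ℂ) (j : Fin p) :
    ‖colL j A‖ ≤ ‖A‖ := by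
  have h := Matrix.l2_opNorm_mulVec A (EuclideanSpace.single j 1)
  rw [EuclideanSpace.norm_single] at h
  simp only [norm_one, mul_one] at h
  have he : A *ᵥ (WithLp.equiv 2 (Fin p → ℂ)) (EuclideanSpace.single j 1) = fun i => A i j := by
    have h1 : (WithLp.equiv 2 (Fin p → ℂ)) (EuclideanSpace.single j 1) = Pi.single j 1 := rfl
    rw [h1, Matrix.mulVec_single]
    simp
    rfl
  rw [colL_apply, ← he]
  exact h

lemma sNorm_eq (A : Matrix (Fin p) (Fin p) ℂ) : sNorm A = ‖A‖ := rfl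

lemma colNorm_le_sNorm (A : Matrix (Fin p) (Fin p) ℂ) : colNorm A ≤ sNorm A := by
  rw [colNorm, sNorm_eq]
  refine Real.iSup_le (fun j => ?_) (norm_nonneg _)
  rw [← norm_colL]
  exact colL_le_norm A j

lemma isUnit_one_sub_smul (B : Matrix (Fin p) (Fin p) ℂ) (hρ : spectralRadius ℂ B < 1)
    (z : ℂ) (hz : ‖z‖ ≤ 1) : IsUnit ((1 : Matrix (Fin p) (Fin p) ℂ) - z • B) := by
  rcases eq_or_ne z 0 with rfl | hz0
  · simpa using isUnit_one (M := Matrix (Fin p) (Fin p) ℂ)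
  · have hmem : (z⁻¹ : ℂ) ∉ spectrum ℂ B := by
      intro hmem
      have h1 : (‖(z⁻¹ : ℂ)‖₊ : ℝ≥0∞) ≤ spectralRadius ℂ B :=
        le_iSup₂ (f := fun k (_ : k ∈ spectrum ℂ B) => (‖k‖₊ : ℝ≥0∞)) _ hmem
      have hr : (1 : ℝ) ≤ ‖(z⁻¹ : ℂ)‖ := by
        rw [norm_inv]
        exact (one_le_inv₀ (norm_pos_iff.mpr hz0)).mpr hz
      have h2 : (1 : ℝ≥0∞) ≤ (‖(z⁻¹ : ℂ)‖₊ : ℝ≥0∞) := by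
        rw [ENNReal.one_le_coe_iff, ← NNReal.coe_le_coe]
        simpa using hr
      exact absurd (lt_of_le_of_lt (h2.trans h1) hρ) (lt_irrefl _)
    have hunit := spectrum.notMem_iff.mp hmem
    have key : (1 : Matrix (Fin p) (Fin p) ℂ) - z • B
        = (algebraMap ℂ (Matrix (Fin p) (Fin p) ℂ) z) * (algebraMap ℂ _ z⁻¹ - B) := by
      rw [Algebra.algebraMap_eq_smul_one, Algebra.algebraMap_eq_smul_one, smul_mul_assoc,
        one_mul, smul_sub, smul_smul, mul_inv_cancel₀ hz0, one_smul]
    rw [key]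
    exact ((isUnit_iff_ne_zero.2 hz0).map (algebraMap ℂ (Matrix (Fin p) (Fin p) ℂ))).mul hunit

lemma resolvent_identity (B : Matrix (Fin p) (Fin p) ℂ) (z : ℂ)
    (hu : IsUnit ((1 : Matrix (Fin p) (Fin p) ℂ) - z • B)) :
    ((1 : Matrix (Fin p) (Fin p) ℂ) - z • B)⁻¹
      = 1 + z • (((1 : Matrix (Fin p) (Fin p) ℂ) - z • B)⁻¹ * B) := by
  set M := (1 : Matrix (Fin p) (Fin p) ℂ) - z • B with hM
  have hdet : IsUnit M.det := (Matrix.isUnit_iff_isUnit_det M).mp hu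
  have h4 : M⁻¹ * M = 1 := Matrix.nonsing_inv_mul _ hdet
  calc M⁻¹ = M⁻¹ * M + z • (M⁻¹ * B) := by
        rw [hM, mul_sub, mul_one, Matrix.mul_smul]
        abel
    _ = 1 + z • (M⁻¹ * B) := by rw [h4]

lemma exists_bound (B : Matrix (Fin p) (Fin p) ℂ) (hρ : spectralRadius ℂ B < 1) :
    ∃ C : ℝ, ∀ z : ℂ, ‖z‖ = 1 → sNorm (((1 : Matrix (Fin p) (Fin p) ℂ) - z • B)⁻¹) ≤ C := by
  haveI : CompleteSpace (Matrix (Fin p) (Fin p) ℂ) := FiniteDimensional.complete ℂ _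
  have hcont : ContinuousOn (fun z : ℂ => Ring.inverse ((1 : Matrix (Fin p) (Fin p) ℂ) - z • B))
      (sphere (0:ℂ) 1) := by
    intro z hz
    have hz1 : ‖z‖ = 1 := by simpa using hz
    have h1 : ContinuousAt (fun z : ℂ => (1 : Matrix (Fin p) (Fin p) ℂ) - z • B) z :=
      (continuous_const.sub (continuous_id.smul continuous_const)).continuousAt
    have h2 : ContinuousAt (Ring.inverse : Matrix (Fin p) (Fin p) ℂ → _)
        ((1 : Matrix (Fin p) (Fin p) ℂ) - z • B) := by
      have := NormedRing.inverse_continuousAt (isUnit_one_sub_smul B hρ z hz1.le).unit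
      rwa [IsUnit.unit_spec] at this
    exact (ContinuousAt.comp (g := (Ring.inverse : Matrix (Fin p) (Fin p) ℂ → _))
      (f := fun z : ℂ => (1 : Matrix (Fin p) (Fin p) ℂ) - z • B) h2 h1).continuousWithinAt
  obtain ⟨C, hC⟩ := (isCompact_sphere (0:ℂ) 1).exists_bound_of_continuousOn hcont
  refine ⟨C, fun z hz => ?_⟩
  rw [sNorm_eq, Matrix.nonsing_inv_eq_ringInverse]
  exact hC z (by simpa using hz)

lemma norm_el (f : Fin p → ℂ) :
    ‖(WithLp.linearEquiv 2 ℂ (Fin p → ℂ)).symm f‖ = Real.sqrt (∑ j, ‖f j‖ ^ 2) := by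
  rw [EuclideanSpace.norm_eq]
  congr 1

set_option maxHeartbeats 1000000 in
lemma main_bound (B : Matrix (Fin p) (Fin p) ℂ) (z : ℂ)
    (hu : IsUnit ((1 : Matrix (Fin p) (Fin p) ℂ) - z • B))
    {c : ℝ} (hc0 : 0 ≤ c)
    (hcol : ∀ j, ‖colL j (((1 : Matrix (Fin p) (Fin p) ℂ) - z • B)⁻¹)‖ ≤ c) :
    sNorm (((1 : Matrix (Fin p) (Fin p) ℂ) - z • B)⁻¹)
      ≤ Real.sqrt (1 + (nnz B : ℝ) * c ^ 2) := by
  classical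
  set R := ((1 : Matrix (Fin p) (Fin p) ℂ) - z • B)⁻¹ with hR
  have hId : R = 1 + z • (R * B) := resolvent_identity B z hu
  set S : Finset (Fin p × Fin p) := Finset.univ.filter (fun ij => B ij.1 ij.2 ≠ 0) with hS
  set T : Finset (Fin p) := S.image Prod.snd with hT
  have hTcard : (T.card : ℝ) ≤ (nnz B : ℝ) := by
    have h1 : nnz B = S.card := by
      rw [nnz, ← Set.ncard_coe_finset]
      congr 1
      ext ij
      simp [hS]
    rw [h1]
    exact_mod_cast Finset.card_image_le
  have hT0 : ∀ j ∉ T, ∀ i, B i j = 0 := by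
    intro j hj i
    by_contra h
    exact hj (Finset.mem_image.mpr ⟨(i, j), by simp [hS, h], rfl⟩)
  rw [sNorm_eq, Matrix.l2_opNorm_def]
  refine ContinuousLinearMap.opNorm_le_bound _ (Real.sqrt_nonneg _) (fun x => ?_)
  set u : Fin p → ℂ := fun j => if j ∈ T then x j else 0 with hu'
  set v : Fin p → ℂ := fun j => if j ∈ T then 0 else x j with hv'
  have huv : (WithLp.equiv 2 (Fin p → ℂ)) x = u + v := by
    funext j
    by_cases h : j ∈ T <;> simp [hu', hv', h]
  have hBv : B *ᵥ v = 0 := by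
    funext i
    simp only [Matrix.mulVec, dotProduct]
    refine Finset.sum_eq_zero (fun j _ => ?_)
    by_cases h : j ∈ T
    · simp [hv', h]
    · simp [hT0 j h i]
  have hRv : R *ᵥ v = v := by
    conv_lhs => rw [hId]
    rw [Matrix.add_mulVec, Matrix.one_mulVec, Matrix.smul_mulVec,
      ← Matrix.mulVec_mulVec, hBv, Matrix.mulVec_zero, smul_zero, add_zero]
  have hRu : R *ᵥ u = ∑ j ∈ T, x j • (fun i => R i j) := by
    funext i
    simp only [Matrix.mulVec, dotProduct, Finset.sum_apply]
    rw [← Finset.sum_subset (Finset.subset_univ T) (fun j _ hj => by simp [hu', hj])]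
    refine Finset.sum_congr rfl (fun j hj => ?_)
    simp [hu', hj, mul_comm]
  set el := (WithLp.linearEquiv 2 ℂ (Fin p → ℂ)).symm with hel
  set a := ‖el u‖ with ha
  set b := ‖el v‖ with hb
  have ha0 : 0 ≤ a := norm_nonneg _
  have hb0 : 0 ≤ b := norm_nonneg _
  have hsum_u : ∑ j, ‖u j‖ ^ 2 = ∑ j ∈ T, ‖x j‖ ^ 2 := by
    rw [← Finset.sum_subset (Finset.subset_univ T) (fun j _ hj => by simp [hu', hj])]
    exact Finset.sum_congr rfl (fun j hj => by simp [hu', hj])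
  have hael : a = Real.sqrt (∑ j, ‖u j‖ ^ 2) := by rw [ha, hel, norm_el]
  have hbel : b = Real.sqrt (∑ j, ‖v j‖ ^ 2) := by rw [hb, hel, norm_el]
  have hupos : (0:ℝ) ≤ ∑ j, ‖u j‖ ^ 2 := Finset.sum_nonneg (fun j _ => sq_nonneg _)
  have hvpos : (0:ℝ) ≤ ∑ j, ‖v j‖ ^ 2 := Finset.sum_nonneg (fun j _ => sq_nonneg _)
  have hasq : a ^ 2 = ∑ j ∈ T, ‖x j‖ ^ 2 := by rw [hael, Real.sq_sqrt hupos, hsum_u]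
  have hbsq : a ^ 2 + b ^ 2 = ‖x‖ ^ 2 := by
    rw [hael, hbel, Real.sq_sqrt hupos, Real.sq_sqrt hvpos, EuclideanSpace.norm_eq,
      Real.sq_sqrt (Finset.sum_nonneg fun j _ => sq_nonneg _), ← Finset.sum_add_distrib]
    exact Finset.sum_congr rfl (fun j _ => by by_cases h : j ∈ T <;> simp [hu', hv', h])
  have hRux : el (R *ᵥ u) = ∑ j ∈ T, x j • colL j R := by
    rw [hRu, map_sum]
    exact Finset.sum_congr rfl (fun j hj => by rw [_root_.map_smul]; rfl)
  have hRunorm : ‖el (R *ᵥ u)‖ ≤ (∑ j ∈ T, ‖x j‖) * c := by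
    rw [hRux]
    refine (norm_sum_le _ _).trans ?_
    rw [Finset.sum_mul]
    refine Finset.sum_le_sum (fun j hj => ?_)
    rw [norm_smul]
    exact mul_le_mul_of_nonneg_left (hcol j) (norm_nonneg _)
  have hsum1 : ∑ j ∈ T, ‖x j‖ ≤ Real.sqrt T.card * a := by
    have h2 : (∑ j ∈ T, ‖x j‖) ^ 2 ≤ (T.card : ℝ) * a ^ 2 := by
      rw [hasq]
      exact_mod_cast sq_sum_le_card_mul_sum_sq (s := T) (f := fun j => ‖x j‖)
    have h3 : (∑ j ∈ T, ‖x j‖) = Real.sqrt ((∑ j ∈ T, ‖x j‖) ^ 2) :=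
      (Real.sqrt_sq (by positivity)).symm
    rw [h3]
    calc Real.sqrt ((∑ j ∈ T, ‖x j‖) ^ 2) ≤ Real.sqrt ((T.card : ℝ) * a ^ 2) :=
          Real.sqrt_le_sqrt h2
      _ = Real.sqrt T.card * a := by
          rw [Real.sqrt_mul (Nat.cast_nonneg _), Real.sqrt_sq ha0]
  have hk0 : (0 : ℝ) ≤ (nnz B : ℝ) := Nat.cast_nonneg _
  set s := Real.sqrt (nnz B : ℝ) with hs
  have hs0 : 0 ≤ s := Real.sqrt_nonneg _
  have hsum2 : ‖el (R *ᵥ u)‖ ≤ s * c * a := by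
    refine hRunorm.trans ?_
    calc (∑ j ∈ T, ‖x j‖) * c ≤ (Real.sqrt T.card * a) * c :=
          mul_le_mul_of_nonneg_right hsum1 hc0
      _ ≤ (s * a) * c := by
          have : Real.sqrt T.card ≤ s := Real.sqrt_le_sqrt hTcard
          exact mul_le_mul_of_nonneg_right (mul_le_mul_of_nonneg_right this ha0) hc0
      _ = s * c * a := by ring
  have hfx : ((Matrix.toEuclideanLin.trans LinearMap.toContinuousLinearMap) R) x
      = el (R *ᵥ u) + el v := by
    rw [LinearEquiv.trans_apply, LinearMap.coe_toContinuousLinearMap',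
      Matrix.toEuclideanLin_apply, show x.ofLp = u + v from huv, Matrix.mulVec_add, hRv]
    rfl
  rw [hfx]
  have hstep : ‖el (R *ᵥ u) + el v‖ ≤ s * c * a + b :=
    (norm_add_le _ _).trans (add_le_add_left hsum2 _)
  refine hstep.trans ?_
  have hq : (s * c * a + b) ^ 2 ≤ (1 + (nnz B : ℝ) * c ^ 2) * (a ^ 2 + b ^ 2) := by
    have hss : s ^ 2 = (nnz B : ℝ) := Real.sq_sqrt hk0
    rw [← hss]
    nlinarith [sq_nonneg (a - s * c * b)]
  have ht0 : 0 ≤ s * c * a + b :=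
    add_nonneg (mul_nonneg (mul_nonneg hs0 hc0) ha0) hb0
  have h1c : (0:ℝ) ≤ 1 + (nnz B : ℝ) * c ^ 2 := by positivity
  calc s * c * a + b = Real.sqrt ((s * c * a + b) ^ 2) := by
        rw [Real.sqrt_sq ht0]
    _ ≤ Real.sqrt ((1 + (nnz B : ℝ) * c ^ 2) * (a ^ 2 + b ^ 2)) := Real.sqrt_le_sqrt hq
    _ = Real.sqrt (1 + (nnz B : ℝ) * c ^ 2) * ‖x‖ := by
        rw [Real.sqrt_mul h1c, hbsq, Real.sqrt_sq (norm_nonneg _)]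

set_option maxHeartbeats 1000000 in
lemma one_le_theta2 (B : Matrix (Fin p) (Fin p) ℂ) (hρ : spectralRadius ℂ B < 1) (hp : 0 < p)
    (bdd2 : BddAbove (Set.range fun z : {z : ℂ // ‖z‖ = 1} =>
      colNorm (((1 : Matrix (Fin p) (Fin p) ℂ) - z.1 • B)⁻¹))) :
    1 ≤ theta2 B := by
  haveI : CompleteSpace (Matrix (Fin p) (Fin p) ℂ) := FiniteDimensional.complete ℂ _
  have j : Fin p := ⟨0, hp⟩
  set f : ℂ → EuclideanSpace ℂ (Fin p) :=
    fun z => colL j (Ring.inverse ((1 : Matrix (Fin p) (Fin p) ℂ) - z • B)) with hf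
  have hdiff : ∀ z : ℂ, ‖z‖ ≤ 1 → DifferentiableAt ℂ f z := by
    intro z hz
    have h1 : DifferentiableAt ℂ (fun z : ℂ => (1 : Matrix (Fin p) (Fin p) ℂ) - z • B) z :=
      (differentiableAt_const _).sub (differentiableAt_id.smul_const B)
    have h2 : DifferentiableAt ℂ
        (fun z : ℂ => Ring.inverse ((1 : Matrix (Fin p) (Fin p) ℂ) - z • B)) z :=
      h1.inverse (isUnit_one_sub_smul B hρ z hz)
    exact (((colL j).toContinuousLinearMap.differentiable).differentiableAt).comp z h2
  have hball : DiffContOnCl ℂ f (Metric.ball (0:ℂ) 1) := by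
    constructor
    · exact fun z hz => (hdiff z (le_of_lt (by simpa using hz))).differentiableWithinAt
    · rw [closure_ball (0:ℂ) one_ne_zero]
      exact fun z hz => (hdiff z (by simpa using hz)).continuousAt.continuousWithinAt
  have hfront : ∀ w ∈ frontier (Metric.ball (0:ℂ) 1), ‖f w‖ ≤ theta2 B := by
    rw [frontier_ball (0:ℂ) one_ne_zero]
    intro w hw
    have hw1 : ‖w‖ = 1 := by simpa using hw
    have hfw : f w = colL j (((1 : Matrix (Fin p) (Fin p) ℂ) - w • B)⁻¹) := by
      rw [hf]
      simp only [Matrix.nonsing_inv_eq_ringInverse]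
    rw [hfw]
    refine (colL_le_colNorm _ j).trans ?_
    exact le_ciSup bdd2 (⟨w, hw1⟩ : {z : ℂ // ‖z‖ = 1})
  have h0 : ‖f 0‖ = 1 := by
    have hf0 : f 0 = colL j (1 : Matrix (Fin p) (Fin p) ℂ) := by
      rw [hf]
      simp
    rw [hf0, norm_colL]
    have hsum : ∑ i, ‖(1 : Matrix (Fin p) (Fin p) ℂ) i j‖ ^ 2 = 1 := by
      rw [Finset.sum_eq_single j]
      · simp [Matrix.one_apply]
      · intro i _ hij
        simp [Matrix.one_apply, hij]
      · simp
    rw [hsum, Real.sqrt_one]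
  have hmax := Complex.norm_le_of_forall_mem_frontier_norm_le Metric.isBounded_ball hball hfront
    (subset_closure (Metric.mem_ball_self one_pos))
  rw [h0] at hmax
  exact hmax

end Stmt10Aux

/-- for a nonzero B with ρ(B) < 1 and k nonzero entries,
ϑ2(B) ≤ ϑ1(B) ≤ √(2k) ϑ2(B). -/
theorem stmt10 {p : ℕ} (B : Matrix (Fin p) (Fin p) ℂ) (hB : B ≠ 0)
    (hρ : spectralRadius ℂ B < 1) (k : ℕ) (hk : k = nnz B) :
    theta2 B ≤ theta1 B ∧ theta1 B ≤ Real.sqrt (2 * k) * theta2 B := by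
  classical
  have hp : 0 < p := by
    rcases Nat.eq_zero_or_pos p with h | h
    · subst h
      exact absurd (Matrix.ext fun (i : Fin 0) _ => i.elim0) hB
    · exact h
  haveI : Nonempty {z : ℂ // ‖z‖ = 1} := ⟨⟨1, by simp⟩⟩
  obtain ⟨C, hC⟩ := Stmt10Aux.exists_bound B hρ
  have bdd1 : BddAbove (Set.range fun z : {z : ℂ // ‖z‖ = 1} =>
      sNorm (((1 : Matrix (Fin p) (Fin p) ℂ) - z.1 • B)⁻¹)) := by
    refine ⟨C, ?_⟩
    rintro _ ⟨z, rfl⟩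
    exact hC z.1 z.2
  have bdd2 : BddAbove (Set.range fun z : {z : ℂ // ‖z‖ = 1} =>
      colNorm (((1 : Matrix (Fin p) (Fin p) ℂ) - z.1 • B)⁻¹)) := by
    refine ⟨C, ?_⟩
    rintro _ ⟨z, rfl⟩
    exact (Stmt10Aux.colNorm_le_sNorm _).trans (hC z.1 z.2)
  have h21 : theta2 B ≤ theta1 B := by
    refine ciSup_le (fun z => ?_)
    exact (Stmt10Aux.colNorm_le_sNorm _).trans (le_ciSup bdd1 z)
  refine ⟨h21, ?_⟩
  have hθ1 : (1:ℝ) ≤ theta2 B := Stmt10Aux.one_le_theta2 B hρ hp bdd2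
  have hθ0 : (0:ℝ) ≤ theta2 B := le_trans zero_le_one hθ1
  have hnnz : 0 < nnz B := by
    obtain ⟨i, j, hij⟩ : ∃ i j, B i j ≠ 0 := by
      by_contra h
      push_neg at h
      exact hB (Matrix.ext fun i j => h i j)
    have hne : {ij : Fin p × Fin p | B ij.1 ij.2 ≠ 0}.Nonempty := ⟨(i, j), hij⟩
    exact (Set.ncard_pos (Set.toFinite _)).mpr hne
  have hk1 : (1:ℝ) ≤ ((nnz B : ℕ) : ℝ) := Nat.one_le_cast.mpr hnnz
  refine ciSup_le (fun z => ?_)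
  have hcol : ∀ j, ‖Stmt10Aux.colL j (((1 : Matrix (Fin p) (Fin p) ℂ) - z.1 • B)⁻¹)‖
      ≤ theta2 B :=
    fun j => (Stmt10Aux.colL_le_colNorm _ j).trans (le_ciSup bdd2 z)
  have hb := Stmt10Aux.main_bound B z.1 (Stmt10Aux.isUnit_one_sub_smul B hρ z.1 z.2.le) hθ0 hcol
  refine hb.trans ?_
  rw [hk]
  have hfin : (1 : ℝ) + (nnz B : ℝ) * theta2 B ^ 2 ≤ (2 * (nnz B : ℝ)) * theta2 B ^ 2 := by
    nlinarith [hk1, hθ1]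
  calc Real.sqrt (1 + (nnz B : ℝ) * theta2 B ^ 2)
      ≤ Real.sqrt ((2 * (nnz B : ℝ)) * theta2 B ^ 2) := Real.sqrt_le_sqrt hfin
    _ = Real.sqrt (2 * (nnz B : ℝ)) * theta2 B := by
        rw [Real.sqrt_mul (by positivity), Real.sqrt_sq hθ0]
end
end

section
/- Let v ∈ ℝ^p, n ≥ 1, M ∈ ℝ^{pn×pn}, and set Ψ = (I_n ⊗ diag(v)) M, where ⊗ is the Kronecker product and diag(v) the diagonal matrix with diagonal v. Then ‖Ψ'Ψ‖_F² ≤ n ‖v‖_0 ‖Ψ‖₂⁴, where ‖v‖_0 is the number of nonzero entries of v. -/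
open Matrix
open scoped BigOperators Kronecker

lemma euc_norm_sq {m : Type*} [Fintype m] (y : m → ℝ) :
    ‖(WithLp.equiv 2 (m → ℝ)).symm y‖ ^ 2 = ∑ i, y i ^ 2 := by
  rw [EuclideanSpace.norm_eq, Real.sq_sqrt (by positivity)]
  simp [sq_abs]

lemma mulVec_sq_sum_le {m n : Type*} [Fintype m] [Fintype n] [DecidableEq n]
    (A : Matrix m n ℝ) (x : n → ℝ) :
    ∑ i, (A *ᵥ x) i ^ 2 ≤ sNorm A ^ 2 * ∑ j, x j ^ 2 := by
  have h := (LinearMap.toContinuousLinearMap (Matrix.toEuclideanLin A)).le_opNorm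
      ((WithLp.equiv 2 (n → ℝ)).symm x)
  rw [LinearMap.coe_toContinuousLinearMap'] at h
  change ‖(WithLp.equiv 2 (m → ℝ)).symm (A *ᵥ x)‖ ≤ _ at h
  have h2 := pow_le_pow_left₀ (norm_nonneg _) h 2
  rw [mul_pow, euc_norm_sq, euc_norm_sq] at h2
  exact h2

open scoped Matrix.Norms.L2Operator in
lemma sNorm_transpose {m n : Type*} [Fintype m] [Fintype n] [DecidableEq m] [DecidableEq n]
    (A : Matrix m n ℝ) : sNorm Aᵀ = sNorm A := by
  have h1 : sNorm Aᵀ = ‖Aᵀ‖ := rfl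
  have h2 : sNorm A = ‖A‖ := rfl
  rw [h1, h2, ← Matrix.conjTranspose_eq_transpose_of_trivial, Matrix.l2_opNorm_conjTranspose]

/-- for Ψ = (I_n ⊗ diag(v)) M, ‖Ψ'Ψ‖_F² ≤ n ‖v‖_0 ‖Ψ‖₂⁴. -/
theorem stmt17 {p : ℕ} (v : Fin p → ℝ) (n : ℕ) (hn : 1 ≤ n)
    (M : Matrix (Fin n × Fin p) (Fin n × Fin p) ℝ) :
    let Ψ : Matrix (Fin n × Fin p) (Fin n × Fin p) ℝ :=
      ((1 : Matrix (Fin n) (Fin n) ℝ) ⊗ₖ Matrix.diagonal v) * M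
    ∑ i, ∑ j, ((Ψᵀ * Ψ) i j) ^ 2 ≤ (n : ℝ) * (vnnz v : ℝ) * sNorm Ψ ^ 4 := by
  intro Ψ
  set s := sNorm Ψ with hs
  have hs0 : (0:ℝ) ≤ s := norm_nonneg _
  have hT : sNorm Ψᵀ = s := sNorm_transpose Ψ
  -- rows with v k.2 = 0 are zero
  have hrow0 : ∀ k : Fin n × Fin p, v k.2 = 0 → ∀ j, Ψ k j = 0 := by
    intro k hk j
    simp only [Ψ, Matrix.mul_apply, Matrix.kroneckerMap_apply]
    apply Finset.sum_eq_zero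
    intro c _
    have : Matrix.diagonal v k.2 c.2 = 0 := by
      simp [Matrix.diagonal_apply, hk]
    simp [this]
  -- single vector sum of squares
  have hsingle : ∀ k : Fin n × Fin p, ∑ i, ((Pi.single k 1 : Fin n × Fin p → ℝ) i) ^ 2 = 1 := by
    intro k
    rw [Finset.sum_eq_single k] <;>
      simp (config := { contextual := true }) [Pi.single_apply]
  -- each row of Ψ has squared norm ≤ s^2
  have hrowbd : ∀ k : Fin n × Fin p, ∑ j, Ψ k j ^ 2 ≤ s ^ 2 := by
    intro k
    have h1 : ∀ j, Ψ k j = (Ψᵀ *ᵥ Pi.single k (1:ℝ)) j := by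
      intro j
      simp [Matrix.mulVec, dotProduct, Pi.single_apply]
    calc ∑ j, Ψ k j ^ 2 = ∑ j, (Ψᵀ *ᵥ Pi.single k (1:ℝ)) j ^ 2 := by
          exact Finset.sum_congr rfl fun j _ => by rw [h1]
      _ ≤ sNorm Ψᵀ ^ 2 * ∑ i, ((Pi.single k 1 : Fin n × Fin p → ℝ) i) ^ 2 := mulVec_sq_sum_le _ _
      _ = s ^ 2 := by rw [hT, hsingle, mul_one]
  -- row i of ΨᵀΨ is Ψᵀ *ᵥ (column i of Ψ)
  have step1 : ∀ i, ∑ j, ((Ψᵀ * Ψ) i j) ^ 2 ≤ s ^ 2 * ∑ k, Ψ k i ^ 2 := by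
    intro i
    have h1 : ∀ j, (Ψᵀ * Ψ) i j = (Ψᵀ *ᵥ fun k => Ψ k i) j := by
      intro j
      simp only [Matrix.mul_apply, Matrix.mulVec, dotProduct, Matrix.transpose_apply]
      exact Finset.sum_congr rfl fun k _ => mul_comm _ _
    calc ∑ j, ((Ψᵀ * Ψ) i j) ^ 2 = ∑ j, (Ψᵀ *ᵥ fun k => Ψ k i) j ^ 2 := by
          exact Finset.sum_congr rfl fun j _ => by rw [h1]
      _ ≤ sNorm Ψᵀ ^ 2 * ∑ k, Ψ k i ^ 2 := mulVec_sq_sum_le _ _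
      _ = s ^ 2 * ∑ k, Ψ k i ^ 2 := by rw [hT]
  -- Frobenius norm bound
  have hcard : (Finset.univ.filter fun k : Fin n × Fin p => v k.2 ≠ 0).card
      = n * vnnz v := by
    have hEq : (Finset.univ.filter fun k : Fin n × Fin p => v k.2 ≠ 0)
        = Finset.univ ×ˢ (Finset.univ.filter fun b => v b ≠ 0) := by
      ext k
      simp [Finset.mem_filter, Finset.mem_product]
    rw [hEq, Finset.card_product, Finset.card_univ, Fintype.card_fin]
    congr 1
    rw [vnnz, Set.ncard_eq_toFinset_card']
    simp [Set.toFinset_setOf]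
  have hF : ∑ k, ∑ i, Ψ k i ^ 2 ≤ ((n : ℝ) * (vnnz v : ℝ)) * s ^ 2 := by
    have hfilter : ∑ k, ∑ i, Ψ k i ^ 2
        = ∑ k ∈ Finset.univ.filter (fun k : Fin n × Fin p => v k.2 ≠ 0),
            ∑ i, Ψ k i ^ 2 := by
      refine (Finset.sum_filter_of_ne ?_).symm
      intro k _ hne
      by_contra h
      apply hne
      apply Finset.sum_eq_zero
      intro i _
      rw [hrow0 k h i]
      ring
    rw [hfilter]
    calc ∑ k ∈ _, ∑ i, Ψ k i ^ 2
        ≤ (Finset.univ.filter fun k : Fin n × Fin p => v k.2 ≠ 0).card • s ^ 2 :=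
          Finset.sum_le_card_nsmul _ _ _ (fun k _ => hrowbd k)
      _ = ((n : ℝ) * (vnnz v : ℝ)) * s ^ 2 := by
          rw [nsmul_eq_mul, hcard]; push_cast; ring
  calc ∑ i, ∑ j, ((Ψᵀ * Ψ) i j) ^ 2
      ≤ ∑ i, s ^ 2 * ∑ k, Ψ k i ^ 2 := Finset.sum_le_sum fun i _ => step1 i
    _ = s ^ 2 * ∑ k, ∑ i, Ψ k i ^ 2 := by rw [← Finset.mul_sum, Finset.sum_comm]
    _ ≤ s ^ 2 * (((n : ℝ) * (vnnz v : ℝ)) * s ^ 2) := by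
        exact mul_le_mul_of_nonneg_left hF (by positivity)
    _ = (n : ℝ) * (vnnz v : ℝ) * s ^ 4 := by ring
end
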